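/- arXiv:1412.6374 — 2 statements merged into one kernel-verified Lean document; each statement's English description precedes it below -/
import Mathlib

section
/- Let ν > 0, T > 0, and define 𝔥(t) = (8/π²) Σ_{n=0}^∞ (1/(2n+1)²) e^{-ν(2n+1)²π² t} and 𝓗(t) = -8ν Σ_{n=0}^∞ e^{-ν(2n+1)²π² t} (so that 𝓗 = 𝔥' on (0,∞)). Then ∫₀ᵀ |𝓗(t)| dt = 𝔥(0) - 𝔥(T) = 1 - 𝔥(T) < 1. -/
open MeasureTheory Real Set

/-- The flux kernel `𝔥(t) = (8/π²) Σₙ (1/(2n+1)²) e^{-ν(2n+1)²π²t}`. -/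
noncomputable def fluxKernel (ν t : ℝ) : ℝ :=
  (8/π^2) * ∑' n : ℕ, (1/(2*(n:ℝ)+1)^2) * Real.exp (-ν * (2*(n:ℝ)+1)^2 * π^2 * t)

/-- The derivative of the flux kernel, `𝓗(t) = -8ν Σₙ e^{-ν(2n+1)²π²t}`. -/
noncomputable def kernelDeriv (ν t : ℝ) : ℝ :=
  -8 * ν * ∑' n : ℕ, Real.exp (-ν * (2*(n:ℝ)+1)^2 * π^2 * t)

lemma odd_sq_hasSum : HasSum (fun n : ℕ => 1/(2*(n:ℝ)+1)^2) (π^2/8) := by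
  have hs1 : Summable (fun n : ℕ => 1/((n:ℝ)+1)^2) := by
    have h0 : Summable (fun n : ℕ => 1/(n:ℝ)^2) := summable_one_div_nat_pow.2 one_lt_two
    have h1 := (summable_nat_add_iff 1).2 h0
    refine h1.congr fun n => ?_
    push_cast
    ring
  have hsum : Summable (fun n : ℕ => 1/(2*(n:ℝ)+1)^2) := by
    refine Summable.of_nonneg_of_le (fun n => by positivity) (fun n => ?_) hs1
    have hn : (0:ℝ) ≤ (n:ℝ) := n.cast_nonneg
    apply one_div_le_one_div_of_le (by positivity)
    nlinarith
  have hodd : HasSum (fun n : ℕ => 1/(2*(n:ℝ)+1)^2) (∑' n : ℕ, 1/(2*(n:ℝ)+1)^2) :=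
    hsum.hasSum
  have heven : HasSum (fun k : ℕ => (fun n : ℕ => 1/(n:ℝ)^2) (2*k)) (π^2/24) := by
    have h := hasSum_zeta_two.mul_left (1/4)
    have heq : (fun n : ℕ => (1/4 : ℝ) * (1/(n:ℝ)^2))
        = fun k : ℕ => (fun n : ℕ => 1/(n:ℝ)^2) (2*k) := by
      funext k
      simp only []
      push_cast
      rw [div_mul_div_comm, mul_pow]
      norm_num
    rw [heq] at h
    rw [show (π^2/24 : ℝ) = 1/4 * (π^2/6) by ring]
    exact h
  have hodd' : HasSum (fun k : ℕ => (fun n : ℕ => 1/(n:ℝ)^2) (2*k+1))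
      (∑' n : ℕ, 1/(2*(n:ℝ)+1)^2) := by
    have heq : (fun k : ℕ => (fun n : ℕ => 1/(n:ℝ)^2) (2*k+1))
        = fun n : ℕ => 1/(2*(n:ℝ)+1)^2 := by
      funext k
      simp only []
      push_cast
      ring
    rw [heq]; exact hodd
  have htot := HasSum.even_add_odd (f := fun n : ℕ => 1/(n:ℝ)^2) heven hodd'
  have huniq := htot.unique hasSum_zeta_two
  have hval : (∑' n : ℕ, 1/(2*(n:ℝ)+1)^2) = π^2/8 := by linarith
  rwa [hval] at hodd

lemma summable_exp_kernel {ν t : ℝ} (hν : 0 < ν) (ht : 0 < t) :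
    Summable (fun n : ℕ => Real.exp (-ν * (2*(n:ℝ)+1)^2 * π^2 * t)) := by
  have hπ := pi_pos
  have ha0 : 0 < ν * π^2 * t := by positivity
  have hgeo : Summable (fun n : ℕ => Real.exp (-(ν * π^2 * t)) ^ (n+1)) := by
    have hr1 : Real.exp (-(ν * π^2 * t)) < 1 := Real.exp_lt_one_iff.2 (by linarith)
    have h := (summable_geometric_of_lt_one (Real.exp_nonneg _) hr1).mul_left
      (Real.exp (-(ν * π^2 * t)))
    refine h.congr fun n => ?_
    ring
  refine Summable.of_nonneg_of_le (fun n => (Real.exp_pos _).le) (fun n => ?_) hgeo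
  rw [show Real.exp (-(ν * π^2 * t)) ^ (n+1)
      = Real.exp (((n:ℝ)+1) * (-(ν * π^2 * t))) by
    rw [show ((n:ℝ)+1) = ((n+1 : ℕ):ℝ) by push_cast; ring, Real.exp_nat_mul]]
  apply Real.exp_le_exp.2
  have hn : (0:ℝ) ≤ (n:ℝ) := n.cast_nonneg
  have hsq : (n:ℝ)+1 ≤ (2*(n:ℝ)+1)^2 := by nlinarith
  nlinarith [mul_le_mul_of_nonneg_right hsq ha0.le]

lemma summable_coef_kernel {ν t : ℝ} (hν : 0 < ν) (ht : 0 ≤ t) :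
    Summable (fun n : ℕ => (1/(2*(n:ℝ)+1)^2) * Real.exp (-ν * (2*(n:ℝ)+1)^2 * π^2 * t)) := by
  refine Summable.of_nonneg_of_le (fun n => by positivity) (fun n => ?_) odd_sq_hasSum.summable
  have hexp : Real.exp (-ν * (2*(n:ℝ)+1)^2 * π^2 * t) ≤ 1 := by
    apply Real.exp_le_one_iff.2
    have h1 : 0 ≤ ν * (2*(n:ℝ)+1)^2 * π^2 * t := by positivity
    nlinarith
  calc (1/(2*(n:ℝ)+1)^2) * Real.exp (-ν * (2*(n:ℝ)+1)^2 * π^2 * t)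
      ≤ (1/(2*(n:ℝ)+1)^2) * 1 := by
        apply mul_le_mul_of_nonneg_left hexp (by positivity)
    _ = 1/(2*(n:ℝ)+1)^2 := mul_one _

lemma exp_interval_integral {c T : ℝ} (hc : 0 < c) (hT : 0 < T) :
    ∫ t in (0:ℝ)..T, Real.exp (-(c * t)) = (1 - Real.exp (-(c * T))) / c := by
  have hd : ∀ t ∈ Set.uIcc (0:ℝ) T,
      HasDerivAt (fun t : ℝ => -Real.exp (-(c * t)) / c) (Real.exp (-(c * t))) t := by
    intro t _
    have h1 : HasDerivAt (fun t : ℝ => -(c * t)) (-c) t := by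
      simpa using ((hasDerivAt_id t).const_mul c).fun_neg
    have h2 := h1.exp
    have h3 := (h2.neg).div_const c
    exact h3.congr_deriv (by field_simp)
  have hcont : IntervalIntegrable (fun t : ℝ => Real.exp (-(c * t))) volume 0 T :=
    (Real.continuous_exp.comp (by continuity)).intervalIntegrable 0 T
  rw [intervalIntegral.integral_eq_sub_of_hasDerivAt hd hcont]
  rw [mul_zero, neg_zero, Real.exp_zero]
  field_simp
  ring

lemma fluxKernel_zero {ν : ℝ} : fluxKernel ν 0 = (8/π^2) * ∑' n : ℕ, 1/(2*(n:ℝ)+1)^2 := by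
  unfold fluxKernel
  congr 1
  refine tsum_congr fun n => ?_
  rw [mul_zero, Real.exp_zero, mul_one]

/-- `∫₀ᵀ |𝓗(t)| dt = 𝔥(0) - 𝔥(T) = 1 - 𝔥(T) < 1`. -/
theorem stmt_9 (ν T : ℝ) (hν : 0 < ν) (hT : 0 < T) :
    (∫ t in (0:ℝ)..T, |kernelDeriv ν t|) = fluxKernel ν 0 - fluxKernel ν T ∧
    fluxKernel ν 0 - fluxKernel ν T = 1 - fluxKernel ν T ∧
    1 - fluxKernel ν T < 1 := by
  have hπ := pi_pos
  have hπ2 : (0:ℝ) < π^2 := by positivity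
  have hπne : π ≠ 0 := pi_ne_zero
  -- abbreviations
  set c : ℕ → ℝ := fun n => ν * (2*(n:ℝ)+1)^2 * π^2 with hc
  have hcpos : ∀ n : ℕ, 0 < c n := fun n => by
    have : (0:ℝ) < 2*(n:ℝ)+1 := by positivity
    positivity
  have hexp_arg : ∀ (n : ℕ) (t : ℝ), -ν * (2*(n:ℝ)+1)^2 * π^2 * t = -(c n * t) := by
    intro n t; rw [hc]; ring
  -- per-term integral value
  have hIval : ∀ n : ℕ, (∫ t in Ioc (0:ℝ) T, 8 * ν * Real.exp (-ν * (2*(n:ℝ)+1)^2 * π^2 * t))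
      = (8/π^2) * (1/(2*(n:ℝ)+1)^2)
        - (8/π^2) * ((1/(2*(n:ℝ)+1)^2) * Real.exp (-ν * (2*(n:ℝ)+1)^2 * π^2 * T)) := by
    intro n
    have h2n : (0:ℝ) < 2*(n:ℝ)+1 := by positivity
    rw [← intervalIntegral.integral_of_le hT.le]
    simp_rw [hexp_arg n]
    rw [intervalIntegral.integral_const_mul, exp_interval_integral (hcpos n) hT]
    rw [hc]
    field_simp
  -- integrability of each term on Ioc 0 T
  have hint : ∀ n : ℕ, Integrable
      (fun t => 8 * ν * Real.exp (-ν * (2*(n:ℝ)+1)^2 * π^2 * t))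
      (volume.restrict (Ioc (0:ℝ) T)) := by
    intro n
    apply Continuous.integrableOn_Ioc
    exact continuous_const.mul (Real.continuous_exp.comp (by continuity))
  -- summability of the integrals of norms
  have hnorm_eq : ∀ n : ℕ,
      (∫ t in Ioc (0:ℝ) T, ‖8 * ν * Real.exp (-ν * (2*(n:ℝ)+1)^2 * π^2 * t)‖)
      = ∫ t in Ioc (0:ℝ) T, 8 * ν * Real.exp (-ν * (2*(n:ℝ)+1)^2 * π^2 * t) := by
    intro n
    refine integral_congr_ae (Filter.Eventually.of_forall fun t => ?_)
    exact Real.norm_of_nonneg (by positivity)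
  have hA : Summable (fun n : ℕ => (8/π^2) * (1/(2*(n:ℝ)+1)^2)) :=
    odd_sq_hasSum.summable.mul_left _
  have hB : Summable (fun n : ℕ =>
      (8/π^2) * ((1/(2*(n:ℝ)+1)^2) * Real.exp (-ν * (2*(n:ℝ)+1)^2 * π^2 * T))) :=
    (summable_coef_kernel hν hT.le).mul_left _
  have hsum_int : Summable (fun n : ℕ =>
      ∫ t in Ioc (0:ℝ) T, ‖8 * ν * Real.exp (-ν * (2*(n:ℝ)+1)^2 * π^2 * t)‖) := by
    refine (hA.sub hB).congr fun n => ?_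
    rw [hnorm_eq n, hIval n]
  -- pointwise identity for |kernelDeriv|
  have hkey : ∀ t ∈ Ioc (0:ℝ) T,
      |kernelDeriv ν t| = ∑' n : ℕ, 8 * ν * Real.exp (-ν * (2*(n:ℝ)+1)^2 * π^2 * t) := by
    intro t ht
    have hS : 0 ≤ ∑' n : ℕ, Real.exp (-ν * (2*(n:ℝ)+1)^2 * π^2 * t) :=
      tsum_nonneg fun n => (Real.exp_pos _).le
    rw [kernelDeriv, abs_mul, abs_of_nonneg hS, tsum_mul_left]
    rw [abs_of_nonpos (by linarith : (-8:ℝ) * ν ≤ 0)]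
    ring
  -- main integral computation
  have hmain : (∫ t in (0:ℝ)..T, |kernelDeriv ν t|) = fluxKernel ν 0 - fluxKernel ν T := by
    rw [intervalIntegral.integral_of_le hT.le]
    rw [setIntegral_congr_fun measurableSet_Ioc hkey]
    rw [← MeasureTheory.integral_tsum_of_summable_integral_norm hint hsum_int]
    have : ∀ n : ℕ, (∫ t in Ioc (0:ℝ) T, 8 * ν * Real.exp (-ν * (2*(n:ℝ)+1)^2 * π^2 * t))
        = (8/π^2) * (1/(2*(n:ℝ)+1)^2)
          - (8/π^2) * ((1/(2*(n:ℝ)+1)^2) * Real.exp (-ν * (2*(n:ℝ)+1)^2 * π^2 * T)) := hIval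
    rw [tsum_congr this, Summable.tsum_sub hA hB, tsum_mul_left, tsum_mul_left]
    rw [fluxKernel_zero]
    rfl
  have hflux1 : fluxKernel ν 0 = 1 := by
    rw [fluxKernel_zero, odd_sq_hasSum.tsum_eq]
    field_simp
  have hfluxT : 0 < fluxKernel ν T := by
    have hpos : 0 < ∑' n : ℕ,
        (1/(2*(n:ℝ)+1)^2) * Real.exp (-ν * (2*(n:ℝ)+1)^2 * π^2 * T) := by
      refine Summable.tsum_pos (summable_coef_kernel hν hT.le) (fun n => by positivity) 0 ?_
      positivity
    exact mul_pos (by positivity) hpos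
  exact ⟨hmain, by rw [hflux1], by linarith⟩
end

section
/- Let ν > 0, T > 0, and let f : [0,T] → ℝ satisfy |f(t₁) - f(t₂)| ≤ L|t₁ - t₂|^γ for all t₁, t₂ ∈ [0,T], with L > 0 and 0 < γ < 1/2. Define 𝔥(t) = (8/π²) Σ_{n=0}^∞ (1/(2n+1)²) e^{-ν(2n+1)²π² t} and 𝓕(t) = ∫₀ᵗ 𝔥(t-τ) f(τ) dτ. Then 𝓕 is differentiable at every t ∈ (0,T) with 𝓕'(t) = f(t) + ∫₀ᵗ 𝔥'(t-τ) f(τ) dτ, where 𝔥'(s) = -8ν Σ_{n=0}^∞ e^{-ν(2n+1)²π² s}. -/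
open MeasureTheory Real Set
lemma odd_pos' (n : ℕ) : (0:ℝ) < 2*(n:ℝ)+1 := by positivity

lemma summable_odd_sq_inv : Summable (fun n : ℕ => 1/(2*(n:ℝ)+1)^2) := by
  have h : Summable (fun n : ℕ => 1/((n:ℝ)+1)^2) := by
    have h2 : Summable (fun n : ℕ => 1/((n:ℝ))^2) :=
      Real.summable_one_div_nat_pow.2 (by norm_num)
    have := (summable_nat_add_iff (f := fun n : ℕ => 1/((n:ℝ))^2) 1).2 h2
    simpa using this
  refine h.of_nonneg_of_le (fun n => by positivity) (fun n => ?_)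
  apply one_div_le_one_div_of_le (by positivity)
  have hn : (0:ℝ) ≤ (n:ℝ) := Nat.cast_nonneg n
  nlinarith

set_option maxHeartbeats 1000000 in
lemma tsum_odd_sq_inv : ∑' n : ℕ, 1/(2*(n:ℝ)+1)^2 = π^2/8 := by
  have hb : HasSum (fun n : ℕ => (1:ℝ) / (n : ℝ) ^ 2) (π ^ 2 / 6) := hasSum_zeta_two
  have hsum : Summable (fun n : ℕ => (1:ℝ) / (n : ℝ) ^ 2) := hb.summable
  have heq : (fun k : ℕ => (1:ℝ) / ((2*k : ℕ) : ℝ) ^ 2) = fun k : ℕ => (1/4) * (1/(k:ℝ)^2) := by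
    funext k
    rcases Nat.eq_zero_or_pos k with h | h
    · simp [h]
    · have : ((2*k : ℕ) : ℝ)^2 = 4 * (k:ℝ)^2 := by push_cast; ring
      rw [this]
      rw [eq_comm]
      field_simp
  have he : Summable (fun k : ℕ => (1:ℝ) / ((2*k : ℕ) : ℝ) ^ 2) := by
    rw [heq]; exact hsum.mul_left _
  have ho : Summable (fun k : ℕ => (1:ℝ) / ((2*k+1 : ℕ) : ℝ) ^ 2) := by
    apply summable_odd_sq_inv.congr
    intro k; push_cast; ring_nf
  have key := tsum_even_add_odd (f := fun n : ℕ => (1:ℝ) / (n : ℝ) ^ 2) he ho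
  have h1 : ∑' k : ℕ, (1:ℝ) / ((2*k : ℕ) : ℝ) ^ 2 = π^2/24 := by
    rw [heq, tsum_mul_left, hb.tsum_eq]; ring
  have h3 : ∑' k : ℕ, (1:ℝ) / ((2*k+1 : ℕ) : ℝ) ^ 2 = ∑' n : ℕ, 1/(2*(n:ℝ)+1)^2 := by
    apply tsum_congr; intro k; push_cast; ring_nf
  rw [h1, h3, hb.tsum_eq] at key
  linarith

lemma exp_neg_le_rpow {x : ℝ} (hx : 0 < x) : Real.exp (-x) ≤ x ^ (-(3/4) : ℝ) := by
  rcases le_or_gt 1 x with h | h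
  · have h1 : Real.exp (-x) ≤ x⁻¹ := by
      rw [Real.exp_neg]
      exact inv_anti₀ hx (by linarith [Real.add_one_le_exp x])
    calc Real.exp (-x) ≤ x⁻¹ := h1
      _ = x ^ (-1 : ℝ) := (Real.rpow_neg_one x).symm
      _ ≤ x ^ (-(3/4) : ℝ) := Real.rpow_le_rpow_of_exponent_le h (by norm_num)
  · calc Real.exp (-x) ≤ 1 := Real.exp_le_one_iff.2 (by linarith)
      _ ≤ x ^ (-(3/4) : ℝ) :=
        Real.one_le_rpow_of_pos_of_le_one_of_nonpos hx h.le (by norm_num)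

lemma summable_odd_rpow : Summable (fun n : ℕ => (2*(n:ℝ)+1) ^ (-(3/2) : ℝ)) := by
  have h : Summable (fun n : ℕ => ((n:ℝ)+1) ^ (-(3/2) : ℝ)) := by
    have h2 : Summable (fun n : ℕ => 1/((n:ℝ)) ^ ((3/2) : ℝ)) :=
      Real.summable_one_div_nat_rpow.2 (by norm_num)
    have h3 := (summable_nat_add_iff (f := fun n : ℕ => 1/((n:ℝ)) ^ ((3/2):ℝ)) 1).2 h2
    apply h3.congr
    intro n
    rw [Real.rpow_neg (by positivity), one_div]
    push_cast
    ring_nf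
  refine h.of_nonneg_of_le (fun n => by positivity) (fun n => ?_)
  exact Real.rpow_le_rpow_of_nonpos (by positivity) (by linarith [Nat.cast_nonneg (α := ℝ) n])
    (by norm_num)

lemma exp_term_le (ν : ℝ) (hν : 0 < ν) {t : ℝ} (ht : 0 < t) (n : ℕ) :
    Real.exp (-ν * (2*(n:ℝ)+1)^2 * π^2 * t)
      ≤ (ν*π^2) ^ (-(3/4):ℝ) * (2*(n:ℝ)+1) ^ (-(3/2):ℝ) * t ^ (-(3/4):ℝ) := by
  have hA : (0:ℝ) < 2*(n:ℝ)+1 := by positivity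
  have hx : (0:ℝ) < ν * π^2 * ((2*(n:ℝ)+1)^2) * t := by
    have := Real.pi_pos; positivity
  have h1 : -ν * (2*(n:ℝ)+1)^2 * π^2 * t = -(ν * π^2 * ((2*(n:ℝ)+1)^2) * t) := by ring
  rw [h1]
  calc Real.exp (-(ν * π^2 * ((2*(n:ℝ)+1)^2) * t))
      ≤ (ν * π^2 * ((2*(n:ℝ)+1)^2) * t) ^ (-(3/4):ℝ) := exp_neg_le_rpow hx
    _ = (ν*π^2) ^ (-(3/4):ℝ) * (2*(n:ℝ)+1) ^ (-(3/2):ℝ) * t ^ (-(3/4):ℝ) := by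
        have hp : (0:ℝ) < π^2 := by have := Real.pi_pos; positivity
        rw [Real.mul_rpow (by positivity) ht.le, Real.mul_rpow (by positivity) (by positivity)]
        congr 1
        have h2 : ((2*(n:ℝ)+1)^2) = (2*(n:ℝ)+1) ^ ((2:ℕ):ℝ) := by
          rw [Real.rpow_natCast]
        rw [h2, ← Real.rpow_mul hA.le]
        norm_num

lemma summable_exp (ν : ℝ) (hν : 0 < ν) {t : ℝ} (ht : 0 < t) :
    Summable (fun n : ℕ => Real.exp (-ν * (2*(n:ℝ)+1)^2 * π^2 * t)) := by
  refine Summable.of_nonneg_of_le (fun n => (Real.exp_pos _).le)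
    (fun n => exp_term_le ν hν ht n) ?_
  exact (summable_odd_rpow.mul_left _).mul_right _

lemma tsum_exp_le (ν : ℝ) (hν : 0 < ν) {t : ℝ} (ht : 0 < t) :
    (∑' n : ℕ, Real.exp (-ν * (2*(n:ℝ)+1)^2 * π^2 * t))
      ≤ ((ν*π^2) ^ (-(3/4):ℝ) * ∑' n : ℕ, (2*(n:ℝ)+1) ^ (-(3/2):ℝ)) * t ^ (-(3/4):ℝ) := by
  have h := Summable.tsum_le_tsum (exp_term_le ν hν ht) (summable_exp ν hν ht)
    ((summable_odd_rpow.mul_left _).mul_right _)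
  calc (∑' n : ℕ, Real.exp (-ν * (2*(n:ℝ)+1)^2 * π^2 * t))
      ≤ ∑' n : ℕ, (ν*π^2) ^ (-(3/4):ℝ) * (2*(n:ℝ)+1) ^ (-(3/2):ℝ) * t ^ (-(3/4):ℝ) := h
    _ = ((ν*π^2) ^ (-(3/4):ℝ) * ∑' n : ℕ, (2*(n:ℝ)+1) ^ (-(3/2):ℝ)) * t ^ (-(3/4):ℝ) := by
        rw [tsum_mul_right, tsum_mul_left]

noncomputable def KC (ν : ℝ) : ℝ :=
  8*ν*((ν*π^2) ^ (-(3/4):ℝ) * ∑' n : ℕ, (2*(n:ℝ)+1) ^ (-(3/2):ℝ))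

lemma summable_flux (ν : ℝ) (hν : 0 < ν) {t : ℝ} (ht : 0 ≤ t) :
    Summable (fun n : ℕ => (1/(2*(n:ℝ)+1)^2) * Real.exp (-ν * (2*(n:ℝ)+1)^2 * π^2 * t)) := by
  refine summable_odd_sq_inv.of_nonneg_of_le (fun n => by positivity) (fun n => ?_)
  have h1 : Real.exp (-ν * (2*(n:ℝ)+1)^2 * π^2 * t) ≤ 1 := by
    rw [Real.exp_le_one_iff]
    have := Real.pi_pos
    have hA : (0:ℝ) < 2*(n:ℝ)+1 := by positivity
    nlinarith [sq_nonneg (2*(n:ℝ)+1), sq_nonneg π, mul_nonneg (mul_nonneg (mul_nonneg hν.le (sq_nonneg (2*(n:ℝ)+1))) (sq_nonneg π)) ht]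
  exact mul_le_of_le_one_right (by positivity) h1

lemma continuousOn_fluxKernel (ν : ℝ) (hν : 0 < ν) : ContinuousOn (fluxKernel ν) (Ici 0) := by
  unfold fluxKernel
  refine continuousOn_const.mul ?_
  refine continuousOn_tsum (u := fun n : ℕ => 1/(2*(n:ℝ)+1)^2) (fun i => ?_)
    summable_odd_sq_inv (fun n x hx => ?_)
  · fun_prop
  · have hA : (0:ℝ) < 2*(n:ℝ)+1 := by positivity
    have h1 : Real.exp (-ν * (2*(n:ℝ)+1)^2 * π^2 * x) ≤ 1 := by
      rw [Real.exp_le_one_iff]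
      have := Real.pi_pos
      have hx0 : (0:ℝ) ≤ x := hx
      nlinarith [mul_nonneg (mul_nonneg (mul_nonneg hν.le (sq_nonneg (2*(n:ℝ)+1))) (sq_nonneg π)) hx0]
    rw [Real.norm_eq_abs, abs_mul, abs_of_pos (Real.exp_pos _), abs_of_pos (by positivity)]
    exact mul_le_of_le_one_right (by positivity) h1

lemma fluxKernel_zero_s12 (ν : ℝ) : fluxKernel ν 0 = 1 := by
  unfold fluxKernel
  have : ∀ n : ℕ, (1/(2*(n:ℝ)+1)^2) * Real.exp (-ν * (2*(n:ℝ)+1)^2 * π^2 * 0)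
      = 1/(2*(n:ℝ)+1)^2 := by intro n; simp
  rw [tsum_congr this, tsum_odd_sq_inv]
  have := Real.pi_ne_zero
  field_simp

lemma hasDerivAt_fluxKernel (ν : ℝ) (hν : 0 < ν) {t : ℝ} (ht : 0 < t) :
    HasDerivAt (fluxKernel ν) (kernelDeriv ν t) t := by
  have pi2 : (0:ℝ) < π ^ 2 := by have := Real.pi_pos; positivity
  have key : HasDerivAt (fun y => ∑' n : ℕ, (1/(2*(n:ℝ)+1)^2) * Real.exp (-ν * (2*(n:ℝ)+1)^2 * π^2 * y))
      (∑' n : ℕ, -(ν * π^2) * Real.exp (-ν * (2*(n:ℝ)+1)^2 * π^2 * t)) t := by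
    refine hasDerivAt_tsum_of_isPreconnected
      (u := fun n : ℕ => (ν * π^2) * Real.exp (-ν * (2*(n:ℝ)+1)^2 * π^2 * (t/2)))
      (g := fun n y => (1/(2*(n:ℝ)+1)^2) * Real.exp (-ν * (2*(n:ℝ)+1)^2 * π^2 * y))
      (g' := fun n y => -(ν * π^2) * Real.exp (-ν * (2*(n:ℝ)+1)^2 * π^2 * y))
      ((summable_exp ν hν (half_pos ht)).mul_left _)
      isOpen_Ioi isPreconnected_Ioi (fun n y hy => ?_) (fun n y hy => ?_)
      (mem_Ioi.2 (half_lt_self ht)) (summable_flux ν hν ht.le)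
      (mem_Ioi.2 (half_lt_self ht))
    · have hA : (0:ℝ) < 2*(n:ℝ)+1 := by positivity
      have h1 : HasDerivAt (fun y : ℝ => (-ν * (2*(n:ℝ)+1)^2 * π^2) * y)
          ((-ν * (2*(n:ℝ)+1)^2 * π^2) * 1) y := (hasDerivAt_id y).const_mul _
      have h2 := (h1.exp).const_mul (1/(2*(n:ℝ)+1)^2)
      refine h2.congr_deriv ?_
      have hA2 : ((2*(n:ℝ)+1)^2) ≠ 0 := by positivity
      field_simp
    · have hA : (0:ℝ) < 2*(n:ℝ)+1 := by positivity
      rw [Real.norm_eq_abs, abs_mul, abs_neg, abs_of_pos (by positivity : (0:ℝ) < ν * π^2),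
        abs_of_pos (Real.exp_pos _)]
      refine mul_le_mul_of_nonneg_left (Real.exp_le_exp.2 ?_) (by positivity)
      have hy' : t/2 ≤ y := le_of_lt (mem_Ioi.1 hy)
      have hc : (0:ℝ) ≤ ν*((2*(n:ℝ)+1)^2)*π^2 := by positivity
      nlinarith [mul_le_mul_of_nonneg_left hy' hc]
  have h3 := key.const_mul ((8:ℝ)/π^2)
  unfold fluxKernel kernelDeriv
  refine h3.congr_deriv ?_
  rw [tsum_mul_left, ← mul_assoc]
  have := Real.pi_ne_zero
  congr 1
  field_simp

lemma continuousAt_kernelDeriv (ν : ℝ) (hν : 0 < ν) {t : ℝ} (ht : 0 < t) :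
    ContinuousAt (kernelDeriv ν) t := by
  have h : ContinuousOn (fun y => ∑' n : ℕ, Real.exp (-ν * (2*(n:ℝ)+1)^2 * π^2 * y))
      (Ici (t/2)) := by
    refine continuousOn_tsum
      (u := fun n : ℕ => Real.exp (-ν * (2*(n:ℝ)+1)^2 * π^2 * (t/2)))
      (fun i => by fun_prop) (summable_exp ν hν (half_pos ht)) (fun n x hx => ?_)
    rw [Real.norm_eq_abs, abs_of_pos (Real.exp_pos _)]
    refine Real.exp_le_exp.2 ?_
    have hx' : t/2 ≤ x := hx
    have hc : (0:ℝ) ≤ ν*((2*(n:ℝ)+1)^2)*π^2 := by positivity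
    nlinarith [mul_le_mul_of_nonneg_left hx' hc]
  have h2 : ContinuousAt (fun y => ∑' n : ℕ, Real.exp (-ν * (2*(n:ℝ)+1)^2 * π^2 * y)) t :=
    (h.continuousWithinAt (mem_Ici.2 (half_le_self ht.le))).continuousAt
      (Ici_mem_nhds (half_lt_self ht))
  exact continuousAt_const.mul h2

lemma KC_nonneg (ν : ℝ) (hν : 0 < ν) : 0 ≤ KC ν := by
  unfold KC
  have h : 0 ≤ ∑' n : ℕ, (2*(n:ℝ)+1) ^ (-(3/2):ℝ) :=
    tsum_nonneg (fun n => Real.rpow_nonneg (by positivity) _)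
  have h2 : (0:ℝ) ≤ (ν*π^2) ^ (-(3/4):ℝ) := Real.rpow_nonneg (by positivity) _
  positivity

lemma abs_kernelDeriv_le (ν : ℝ) (hν : 0 < ν) {t : ℝ} (ht : 0 < t) :
    |kernelDeriv ν t| ≤ KC ν * t ^ (-(3/4):ℝ) := by
  unfold kernelDeriv KC
  have hS : 0 ≤ ∑' n : ℕ, Real.exp (-ν * (2*(n:ℝ)+1)^2 * π^2 * t) :=
    tsum_nonneg (fun n => (Real.exp_pos _).le)
  rw [abs_mul, abs_of_nonneg hS]
  have h8 : |(-8:ℝ) * ν| = 8 * ν := by rw [abs_mul]; simp [abs_of_pos hν]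
  rw [h8]
  have key := mul_le_mul_of_nonneg_left (tsum_exp_le ν hν ht)
    (show (0:ℝ) ≤ 8*ν by positivity)
  refine le_trans (le_of_eq (by ring)) (le_trans key (le_of_eq (by ring)))

lemma intervalIntegrable_kernelDeriv (ν : ℝ) (hν : 0 < ν) {b : ℝ} (hb : 0 ≤ b) :
    IntervalIntegrable (kernelDeriv ν) volume 0 b := by
  have hg : IntervalIntegrable (fun t : ℝ => KC ν * t ^ (-(3/4):ℝ)) volume 0 b :=
    (intervalIntegral.intervalIntegrable_rpow' (by norm_num)).const_mul _
  refine hg.mono_fun ?_ ?_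
  · have hc : ContinuousOn (kernelDeriv ν) (Ioc 0 b) := fun x hx =>
      (continuousAt_kernelDeriv ν hν hx.1).continuousWithinAt
    have h2 := hc.aestronglyMeasurable (μ := volume) measurableSet_Ioc
    rwa [uIoc_of_le hb]
  · rw [uIoc_of_le hb]
    filter_upwards [ae_restrict_mem measurableSet_Ioc] with x hx
    rw [Real.norm_eq_abs, Real.norm_eq_abs]
    refine (abs_kernelDeriv_le ν hν hx.1).trans (le_abs_self _)

lemma fluxKernel_sub_one (ν : ℝ) (hν : 0 < ν) {s : ℝ} (hs : 0 ≤ s) :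
    ∫ r in (0:ℝ)..s, kernelDeriv ν r = fluxKernel ν s - 1 := by
  rcases eq_or_lt_of_le hs with rfl | hs'
  · simp [fluxKernel_zero_s12 ν]
  · rw [intervalIntegral.integral_eq_sub_of_hasDeriv_right_of_le hs
      (((continuousOn_fluxKernel ν hν).mono (fun x hx => hx.1)))
      (fun x hx => (hasDerivAt_fluxKernel ν hν hx.1).hasDerivWithinAt)
      (intervalIntegrable_kernelDeriv ν hν hs), fluxKernel_zero_s12 ν]

lemma hoelder_continuousOn {T L γ : ℝ} (hγ₀ : 0 < γ) {f : ℝ → ℝ}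
    (hf : ∀ t₁ ∈ Icc (0:ℝ) T, ∀ t₂ ∈ Icc (0:ℝ) T, |f t₁ - f t₂| ≤ L * |t₁ - t₂| ^ γ) :
    ContinuousOn f (Icc 0 T) := by
  intro x hx
  unfold ContinuousWithinAt
  rw [tendsto_iff_dist_tendsto_zero]
  have hbnd : ∀ᶠ y in nhdsWithin x (Icc 0 T), dist (f y) (f x) ≤ L * |y - x| ^ γ := by
    filter_upwards [self_mem_nhdsWithin] with y hy
    rw [Real.dist_eq]
    exact hf y hy x hx
  have htend : Filter.Tendsto (fun y => L * |y - x| ^ γ) (nhdsWithin x (Icc 0 T)) (nhds 0) := by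
    have h1 : Filter.Tendsto (fun y : ℝ => |y - x|) (nhds x) (nhds 0) := by
      have hc : Continuous (fun y : ℝ => |y - x|) := (continuous_id.sub continuous_const).abs
      have := hc.tendsto x
      simpa using this
    have h2 : ContinuousAt (fun z : ℝ => z ^ γ) 0 :=
      Real.continuousAt_rpow_const 0 γ (Or.inr hγ₀.le)
    have h3 := (h2.tendsto.comp h1)
    rw [Real.zero_rpow hγ₀.ne'] at h3
    have h4 := h3.const_mul L
    rw [mul_zero] at h4
    exact h4.mono_left nhdsWithin_le_nhds
  exact squeeze_zero' (Filter.Eventually.of_forall (fun y => dist_nonneg)) hbnd htend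

lemma hoelder_bound {T L γ : ℝ} (hT : 0 < T) (hL : 0 < L) (hγ₀ : 0 < γ) {f : ℝ → ℝ}
    (hf : ∀ t₁ ∈ Icc (0:ℝ) T, ∀ t₂ ∈ Icc (0:ℝ) T, |f t₁ - f t₂| ≤ L * |t₁ - t₂| ^ γ) :
    ∀ τ ∈ Icc (0:ℝ) T, |f τ| ≤ |f 0| + L * T ^ γ := by
  intro τ hτ
  have h0 : (0:ℝ) ∈ Icc (0:ℝ) T := ⟨le_refl _, hT.le⟩
  have h1 := hf τ hτ 0 h0
  have h2 : |τ - 0| ^ γ ≤ T ^ γ := by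
    rw [sub_zero, abs_of_nonneg hτ.1]
    exact Real.rpow_le_rpow hτ.1 hτ.2 hγ₀.le
  have h4 : |f τ| - |f 0| ≤ |f τ - f 0| := abs_sub_abs_le_abs_sub (f τ) (f 0)
  have h5 := mul_le_mul_of_nonneg_left h2 hL.le
  linarith

lemma kernelDeriv_zero (ν : ℝ) : kernelDeriv ν 0 = 0 := by
  unfold kernelDeriv
  have h : ¬ Summable (fun n : ℕ => Real.exp (-ν * (2*(n:ℝ)+1)^2 * π^2 * 0)) := by
    simp only [mul_zero, Real.exp_zero]
    rw [summable_const_iff]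
    norm_num
  rw [tsum_eq_zero_of_not_summable h, mul_zero]

section conv
variable {ν T B : ℝ} {f : ℝ → ℝ}

lemma aesm_shift (hν : 0 < ν) (hcf : ContinuousOn f (Icc 0 T))
    {s : ℝ} (hsT : s ≤ T) :
    AEStronglyMeasurable (fun r => kernelDeriv ν r * f (s - r))
      (volume.restrict (Ioc 0 s)) := by
  have hc : ContinuousOn (fun r => kernelDeriv ν r * f (s - r)) (Ioc 0 s) := by
    refine ContinuousOn.mul (fun r hr => (continuousAt_kernelDeriv ν hν hr.1).continuousWithinAt) ?_
    refine hcf.comp ((continuous_const.sub continuous_id).continuousOn) ?_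
    intro r hr
    exact ⟨by simp; linarith [hr.2], by simp; linarith [hr.1]⟩
  exact hc.aestronglyMeasurable measurableSet_Ioc

lemma integrable_shift (hν : 0 < ν) (hcf : ContinuousOn f (Icc 0 T))
    (hB : ∀ τ ∈ Icc (0:ℝ) T, |f τ| ≤ B) (hB0 : 0 ≤ B)
    {s : ℝ} (hs0 : 0 ≤ s) (hsT : s ≤ T) :
    IntervalIntegrable (fun r => kernelDeriv ν r * f (s - r)) volume 0 s := by
  have hg : IntervalIntegrable (fun r : ℝ => (B * KC ν) * r ^ (-(3/4):ℝ)) volume 0 s :=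
    (intervalIntegral.intervalIntegrable_rpow' (by norm_num)).const_mul _
  refine hg.mono_fun ?_ ?_
  · rw [uIoc_of_le hs0]; exact aesm_shift hν hcf hsT
  · rw [uIoc_of_le hs0]
    filter_upwards [ae_restrict_mem measurableSet_Ioc] with r hr
    rw [Real.norm_eq_abs, Real.norm_eq_abs, abs_mul]
    have h1 : |kernelDeriv ν r| ≤ KC ν * r ^ (-(3/4):ℝ) := abs_kernelDeriv_le ν hν hr.1
    have h2 : |f (s - r)| ≤ B := hB _ ⟨by linarith [hr.2], by linarith [hr.1]⟩
    have h3 : (0:ℝ) ≤ r ^ (-(3/4):ℝ) := Real.rpow_nonneg hr.1.le _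
    calc |kernelDeriv ν r| * |f (s - r)| ≤ (KC ν * r ^ (-(3/4):ℝ)) * B :=
          mul_le_mul h1 h2 (abs_nonneg _) (mul_nonneg (KC_nonneg ν hν) h3)
      _ = B * KC ν * r ^ (-(3/4):ℝ) := by ring
      _ ≤ |B * KC ν * r ^ (-(3/4):ℝ)| := le_abs_self _

lemma shift_eq (s : ℝ) :
    (∫ τ in (0:ℝ)..s, kernelDeriv ν (s - τ) * f τ)
      = ∫ r in (0:ℝ)..s, kernelDeriv ν r * f (s - r) := by
  have h0 := intervalIntegral.integral_comp_sub_left (a := 0) (b := s)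
    (fun r => kernelDeriv ν r * f (s - r)) s
  simp only [sub_sub_cancel, sub_self, sub_zero] at h0
  exact h0

lemma H_bound (hν : 0 < ν) (hcf : ContinuousOn f (Icc 0 T))
    (hB : ∀ τ ∈ Icc (0:ℝ) T, |f τ| ≤ B) (hB0 : 0 ≤ B) (hT : 0 < T)
    {s : ℝ} (hs0 : 0 ≤ s) (hsT : s ≤ T) :
    |∫ τ in (0:ℝ)..s, kernelDeriv ν (s - τ) * f τ| ≤ B * KC ν * 4 * T ^ ((1:ℝ)/4) := by
  rw [shift_eq]
  have hint := integrable_shift hν hcf hB hB0 hs0 hsT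
  have hg : IntervalIntegrable (fun r : ℝ => (B * KC ν) * r ^ (-(3/4):ℝ)) volume 0 s :=
    (intervalIntegral.intervalIntegrable_rpow' (by norm_num)).const_mul _
  have h1 : |∫ r in (0:ℝ)..s, kernelDeriv ν r * f (s - r)|
      ≤ ∫ r in (0:ℝ)..s, |kernelDeriv ν r * f (s - r)| := by
    have h := intervalIntegral.norm_integral_le_integral_norm (μ := volume)
      (f := fun r => kernelDeriv ν r * f (s - r)) (a := 0) (b := s) hs0
    simp only [Real.norm_eq_abs] at h
    exact h
  have h2 : (∫ r in (0:ℝ)..s, |kernelDeriv ν r * f (s - r)|)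
      ≤ ∫ r in (0:ℝ)..s, (B * KC ν) * r ^ (-(3/4):ℝ) := by
    refine intervalIntegral.integral_mono_on hs0 hint.abs hg ?_
    intro r hr
    rcases eq_or_lt_of_le hr.1 with rfl | hr0
    · rw [kernelDeriv_zero, zero_mul, abs_zero, Real.zero_rpow (by norm_num), mul_zero]
    · rw [abs_mul]
      have hKC := KC_nonneg ν hν
      have h3 : (0:ℝ) ≤ r ^ (-(3/4):ℝ) := Real.rpow_nonneg hr0.le _
      calc |kernelDeriv ν r| * |f (s - r)|
          ≤ (KC ν * r ^ (-(3/4):ℝ)) * B := mul_le_mul (abs_kernelDeriv_le ν hν hr0)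
            (hB _ ⟨by linarith [hr.2], by linarith [hr0]⟩) (abs_nonneg _) (by positivity)
        _ = (B * KC ν) * r ^ (-(3/4):ℝ) := by ring
  have h4 : (∫ r in (0:ℝ)..s, (B * KC ν) * r ^ (-(3/4):ℝ))
      = (B * KC ν) * ((s ^ ((1:ℝ)/4) - (0:ℝ) ^ ((1:ℝ)/4)) / (1/4)) := by
    rw [intervalIntegral.integral_const_mul, integral_rpow (Or.inl (by norm_num))]
    norm_num
  have hKC := KC_nonneg ν hν
  have h5 : s ^ ((1:ℝ)/4) ≤ T ^ ((1:ℝ)/4) := Real.rpow_le_rpow hs0 hsT (by norm_num)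
  have h6 : (0:ℝ) ^ ((1:ℝ)/4) = 0 := Real.zero_rpow (by norm_num)
  rw [h6] at h4
  have h7 : (B * KC ν) * ((s ^ ((1:ℝ)/4) - 0) / (1/4)) ≤ B * KC ν * 4 * T ^ ((1:ℝ)/4) := by
    have : (B * KC ν) * ((s ^ ((1:ℝ)/4) - 0) / (1/4)) = (B * KC ν * 4) * s ^ ((1:ℝ)/4) := by ring
    rw [this]
    exact mul_le_mul_of_nonneg_left h5 (by positivity)
  linarith [h1, h2, h4 ▸ h2]
end conv

section Hcont
variable {ν T B : ℝ} {f : ℝ → ℝ}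

lemma H_repr (hν : 0 < ν) {s : ℝ} (hs : s ∈ Ioo (0:ℝ) T) :
    (∫ r in (0:ℝ)..s, kernelDeriv ν r * f (s - r))
      = ∫ r in Ioc (0:ℝ) T, (Ioc (0:ℝ) s).indicator (fun r => kernelDeriv ν r * f (s - r)) r := by
  rw [intervalIntegral.integral_of_le hs.1.le,
    MeasureTheory.setIntegral_indicator measurableSet_Ioc,
    inter_eq_self_of_subset_right (Ioc_subset_Ioc_right hs.2.le)]

lemma H_continuousAt (hν : 0 < ν) (hT : 0 < T) (hcf : ContinuousOn f (Icc 0 T))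
    (hB : ∀ τ ∈ Icc (0:ℝ) T, |f τ| ≤ B) (hB0 : 0 ≤ B)
    {s₀ : ℝ} (hs₀ : s₀ ∈ Ioo (0:ℝ) T) :
    ContinuousAt (fun s => ∫ τ in (0:ℝ)..s, kernelDeriv ν (s - τ) * f τ) s₀ := by
  set ψ : ℝ → ℝ → ℝ := fun s => (Ioc (0:ℝ) s).indicator (fun r => kernelDeriv ν r * f (s - r))
    with hψ
  set μ : Measure ℝ := volume.restrict (Ioc (0:ℝ) T) with hμ
  have hmem : ∀ᶠ s in nhds s₀, s ∈ Ioo (0:ℝ) T := (isOpen_Ioo.mem_nhds hs₀)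
  have htend : Filter.Tendsto (fun s => ∫ r, ψ s r ∂μ) (nhds s₀) (nhds (∫ r, ψ s₀ r ∂μ)) := by
    refine MeasureTheory.tendsto_integral_filter_of_dominated_convergence
      (bound := fun r => B * (KC ν * r ^ (-(3/4):ℝ))) ?_ ?_ ?_ ?_
    · filter_upwards [hmem] with s hs
      rw [hψ]
      refine (aestronglyMeasurable_indicator_iff measurableSet_Ioc).2 ?_
      rw [hμ, Measure.restrict_restrict measurableSet_Ioc,
        inter_eq_self_of_subset_left (Ioc_subset_Ioc_right hs.2.le)]
      exact aesm_shift hν hcf hs.2.le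
    · filter_upwards [hmem] with s hs
      filter_upwards [ae_restrict_mem measurableSet_Ioc] with r hr
      rcases le_or_gt r s with h | h
      · have hrs : r ∈ Ioc (0:ℝ) s := ⟨hr.1, h⟩
        simp only [hψ, indicator_of_mem hrs, Real.norm_eq_abs, abs_mul]
        have h1 : |kernelDeriv ν r| ≤ KC ν * r ^ (-(3/4):ℝ) := abs_kernelDeriv_le ν hν hr.1
        have h2 : |f (s - r)| ≤ B := hB _ ⟨by linarith [h], by linarith [hr.1, hs.2.le]⟩
        have h3 : (0:ℝ) ≤ r ^ (-(3/4):ℝ) := Real.rpow_nonneg hr.1.le _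
        calc |kernelDeriv ν r| * |f (s - r)| ≤ (KC ν * r ^ (-(3/4):ℝ)) * B :=
              mul_le_mul h1 h2 (abs_nonneg _) (mul_nonneg (KC_nonneg ν hν) h3)
          _ = B * (KC ν * r ^ (-(3/4):ℝ)) := by ring
      · have hrs : r ∉ Ioc (0:ℝ) s := fun hc => absurd hc.2 (not_le.2 h)
        simp only [hψ, indicator_of_notMem hrs, norm_zero]
        have h3 : (0:ℝ) ≤ r ^ (-(3/4):ℝ) := Real.rpow_nonneg hr.1.le _
        exact mul_nonneg hB0 (mul_nonneg (KC_nonneg ν hν) h3)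
    · have h := ((intervalIntegral.intervalIntegrable_rpow'
        (r := -(3/4)) (by norm_num) (a := 0) (b := T)).const_mul (KC ν)).const_mul B
      have h2 := h.1
      simpa [mul_assoc, hμ, IntegrableOn] using h2
    · have hsing : ∀ᵐ r ∂μ, r ≠ s₀ := by
        rw [ae_iff]
        have : {a | ¬ a ≠ s₀} = {s₀} := by ext a; simp
        rw [this, hμ, Measure.restrict_apply (measurableSet_singleton _)]
        exact measure_mono_null (inter_subset_left) (measure_singleton _)
      filter_upwards [hsing, ae_restrict_mem measurableSet_Ioc] with r hr hrT
      rcases lt_or_gt_of_ne hr with h | h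
      · -- r < s₀
        have hev : ∀ᶠ s in nhds s₀, ψ s r = kernelDeriv ν r * f (s - r) := by
          filter_upwards [isOpen_Ioi.mem_nhds (show s₀ ∈ Ioi r from h)] with s hs
          exact Set.indicator_of_mem (show r ∈ Ioc (0:ℝ) s from ⟨hrT.1, le_of_lt hs⟩) _
        have hcont : Filter.Tendsto (fun s => kernelDeriv ν r * f (s - r)) (nhds s₀)
            (nhds (kernelDeriv ν r * f (s₀ - r))) := by
          have hfc : ContinuousAt f (s₀ - r) := by
            refine hcf.continuousAt (Icc_mem_nhds ?_ ?_)
            · linarith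
            · linarith [hs₀.2, hrT.1]
          have hsub : Filter.Tendsto (fun s : ℝ => s - r) (nhds s₀) (nhds (s₀ - r)) :=
            (continuous_id.sub continuous_const).tendsto s₀
          exact (hfc.tendsto.comp hsub).const_mul _
        have h0 : ψ s₀ r = kernelDeriv ν r * f (s₀ - r) :=
          Set.indicator_of_mem (show r ∈ Ioc (0:ℝ) s₀ from ⟨hrT.1, h.le⟩) _
        rw [h0]
        refine Filter.Tendsto.congr' ?_ hcont
        filter_upwards [hev] with s hs using hs.symm
      · -- r > s₀ : eventually 0
        have hev : ∀ᶠ s in nhds s₀, ψ s r = 0 := by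
          filter_upwards [isOpen_Iio.mem_nhds (show s₀ ∈ Iio r from h)] with s hs
          exact Set.indicator_of_notMem
            (show r ∉ Ioc (0:ℝ) s from fun hc => absurd hc.2 (not_le.2 hs)) _
        have h0 : ψ s₀ r = 0 := Set.indicator_of_notMem
          (show r ∉ Ioc (0:ℝ) s₀ from fun hc => absurd hc.2 (not_le.2 h)) _
        rw [h0]
        refine Filter.Tendsto.congr' ?_ tendsto_const_nhds
        filter_upwards [hev] with s hs using hs.symm
  have heq : (fun s => ∫ r, ψ s r ∂μ)
      =ᶠ[nhds s₀] (fun s => ∫ τ in (0:ℝ)..s, kernelDeriv ν (s - τ) * f τ) := by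
    filter_upwards [hmem] with s hs
    rw [shift_eq, H_repr hν hs]
  have hval : (∫ r, ψ s₀ r ∂μ) = ∫ τ in (0:ℝ)..s₀, kernelDeriv ν (s₀ - τ) * f τ := by
    rw [shift_eq, H_repr hν hs₀]
  have hfinal : Filter.Tendsto (fun s => ∫ τ in (0:ℝ)..s, kernelDeriv ν (s - τ) * f τ)
      (nhds s₀) (nhds (∫ τ in (0:ℝ)..s₀, kernelDeriv ν (s₀ - τ) * f τ)) := by
    rw [← hval]
    exact htend.congr' heq
  exact hfinal
end Hcont

section fub
variable {ν T B : ℝ} {f : ℝ → ℝ}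

lemma fubini_step (hν : 0 < ν) (hT : 0 < T) (hcf : ContinuousOn f (Icc 0 T))
    (hB : ∀ τ ∈ Icc (0:ℝ) T, |f τ| ≤ B) (hB0 : 0 ≤ B)
    {u : ℝ} (hu0 : 0 < u) (huT : u ≤ T) :
    (∫ τ in (0:ℝ)..u, (fluxKernel ν (u - τ) - 1) * f τ)
      = ∫ s in (0:ℝ)..u, ∫ τ in (0:ℝ)..s, kernelDeriv ν (s - τ) * f τ := by
  classical
  set W : ℝ × ℝ → ℝ := fun p => kernelDeriv ν (p.2 - p.1) * f p.1 with hW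
  set S : Set (ℝ × ℝ) := {p : ℝ × ℝ | 0 < p.1 ∧ p.1 < p.2 ∧ p.2 ≤ u} with hS
  have hSmeas : MeasurableSet S := by
    have : S = {p : ℝ × ℝ | 0 < p.1} ∩ ({p : ℝ × ℝ | p.1 < p.2} ∩ {p : ℝ × ℝ | p.2 ≤ u}) := by
      ext p; simp [hS, and_assoc]
    rw [this]
    exact (measurableSet_lt measurable_const measurable_fst).inter
      ((measurableSet_lt measurable_fst measurable_snd).inter
        (measurableSet_le measurable_snd measurable_const))
  -- continuity of W on S
  have hWcont : ContinuousOn W S := by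
    refine ContinuousOn.mul ?_ ?_
    · have hkd : ContinuousOn (kernelDeriv ν) (Ioi 0) := fun x hx =>
        (continuousAt_kernelDeriv ν hν hx).continuousWithinAt
      refine hkd.comp ((continuous_snd.sub continuous_fst).continuousOn) ?_
      intro p hp
      exact sub_pos.2 hp.2.1
    · refine hcf.comp (continuous_fst.continuousOn) ?_
      intro p hp
      exact ⟨hp.1.le, le_trans (le_trans hp.2.1.le hp.2.2) huT⟩
  -- integrability of W on S
  have hW_int : IntegrableOn W S (volume.prod volume) := by
    have h1 : Integrable (fun x : ℝ => (Ioc (0:ℝ) u).indicator (fun _ => B) x) volume := by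
      rw [integrable_indicator_iff measurableSet_Ioc]
      exact integrableOn_const measure_Ioc_lt_top.ne
    have h2 : Integrable (fun r : ℝ =>
        (Ioo (0:ℝ) u).indicator (fun r => KC ν * r ^ (-(3/4):ℝ)) r) volume := by
      rw [integrable_indicator_iff measurableSet_Ioo]
      exact (((intervalIntegral.intervalIntegrable_rpow' (r := -(3/4)) (by norm_num)
        (a := 0) (b := u)).const_mul (KC ν)).1).mono_set Ioo_subset_Ioc_self
    have hP : Integrable (fun q : ℝ × ℝ => (Ioc (0:ℝ) u).indicator (fun _ => B) q.1 *
        (Ioo (0:ℝ) u).indicator (fun r => KC ν * r ^ (-(3/4):ℝ)) q.2) (volume.prod volume) :=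
      h1.mul_prod h2
    have hmp : MeasurePreserving (fun z : ℝ × ℝ => (z.1, z.2 - z.1))
        ((volume : Measure ℝ).prod volume) ((volume : Measure ℝ).prod volume) :=
      measurePreserving_prod_sub volume volume
    have hG : Integrable (fun p : ℝ × ℝ => (Ioc (0:ℝ) u).indicator (fun _ => B) p.1 *
        (Ioo (0:ℝ) u).indicator (fun r => KC ν * r ^ (-(3/4):ℝ)) (p.2 - p.1))
        (volume.prod volume) := by
      exact (hmp.integrable_comp hP.aestronglyMeasurable).2 hP
    refine Integrable.mono' hG.restrict (hWcont.aestronglyMeasurable hSmeas) ?_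
    filter_upwards [ae_restrict_mem hSmeas] with p hp
    have hp1 : p.1 ∈ Ioc (0:ℝ) u := ⟨hp.1, le_trans hp.2.1.le hp.2.2⟩
    have hpd : p.2 - p.1 ∈ Ioo (0:ℝ) u := ⟨sub_pos.2 hp.2.1, by
      have h1' := hp.1; have h2' := hp.2.2; linarith⟩
    rw [indicator_of_mem hp1, indicator_of_mem hpd]
    have h3 : (0:ℝ) ≤ (p.2 - p.1) ^ (-(3/4):ℝ) := Real.rpow_nonneg (sub_pos.2 hp.2.1).le _
    have h4 : |f p.1| ≤ B := hB _ ⟨hp.1.le, le_trans (le_trans hp.2.1.le hp.2.2) huT⟩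
    rw [hW, Real.norm_eq_abs, abs_mul]
    calc |kernelDeriv ν (p.2 - p.1)| * |f p.1|
        ≤ (KC ν * (p.2 - p.1) ^ (-(3/4):ℝ)) * B :=
          mul_le_mul (abs_kernelDeriv_le ν hν (sub_pos.2 hp.2.1)) h4 (abs_nonneg _)
            (mul_nonneg (KC_nonneg ν hν) h3)
      _ = B * (KC ν * (p.2 - p.1) ^ (-(3/4):ℝ)) := by ring
  -- step 1 : rewrite LHS as iterated integral
  have step1 : (∫ τ in (0:ℝ)..u, (fluxKernel ν (u - τ) - 1) * f τ)
      = ∫ τ in (0:ℝ)..u, ∫ s in τ..u, W (τ, s) := by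
    refine intervalIntegral.integral_congr ?_
    intro τ hτ
    rw [uIcc_of_le hu0.le] at hτ
    have hflux : fluxKernel ν (u - τ) - 1 = ∫ s in τ..u, kernelDeriv ν (s - τ) := by
      rw [intervalIntegral.integral_comp_sub_right (fun r => kernelDeriv ν r) τ, sub_self,
        fluxKernel_sub_one ν hν (by linarith [hτ.2] : (0:ℝ) ≤ u - τ)]
    show (fluxKernel ν (u - τ) - 1) * f τ = ∫ s in τ..u, W (τ, s)
    rw [hflux, ← intervalIntegral.integral_mul_const]
  -- step 3 : convert to indicator integrals
  have step3 : (∫ τ in (0:ℝ)..u, ∫ s in τ..u, W (τ, s))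
      = ∫ τ : ℝ, ∫ s : ℝ, S.indicator W (τ, s) := by
    rw [intervalIntegral.integral_of_le hu0.le, ← integral_indicator measurableSet_Ioc]
    congr 1
    funext τ
    by_cases hτ : τ ∈ Ioc (0:ℝ) u
    · rw [indicator_of_mem hτ, intervalIntegral.integral_of_le hτ.2,
        ← integral_indicator measurableSet_Ioc]
      congr 1
      funext s
      by_cases hs : s ∈ Ioc τ u
      · rw [indicator_of_mem hs, indicator_of_mem (show (τ, s) ∈ S from ⟨hτ.1, hs.1, hs.2⟩)]
      · rw [indicator_of_notMem hs, indicator_of_notMem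
          (show (τ, s) ∉ S from fun hc => hs ⟨hc.2.1, hc.2.2⟩)]
    · rw [indicator_of_notMem hτ]
      have hz : ∀ s : ℝ, S.indicator W (τ, s) = 0 := by
        intro s
        refine indicator_of_notMem (fun hc => ?_) _
        rcases hc with ⟨h1, h2, h3⟩
        exact hτ ⟨h1, le_trans h2.le h3⟩
      simp only [hz, integral_zero]
  -- step 4 : Fubini swap
  have hint : Integrable (Function.uncurry fun τ s => S.indicator W (τ, s))
      (volume.prod volume) := by
    have h := (integrable_indicator_iff hSmeas).2 hW_int
    have heq : (Function.uncurry fun τ s => S.indicator W (τ, s)) = S.indicator W := by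
      funext p
      cases p
      rfl
    rw [heq]
    exact h
  have step4 : (∫ τ : ℝ, ∫ s : ℝ, S.indicator W (τ, s))
      = ∫ s : ℝ, ∫ τ : ℝ, S.indicator W (τ, s) :=
    integral_integral_swap hint
  -- step 5 : convert back
  have step5 : (∫ s : ℝ, ∫ τ : ℝ, S.indicator W (τ, s))
      = ∫ s in (0:ℝ)..u, ∫ τ in (0:ℝ)..s, kernelDeriv ν (s - τ) * f τ := by
    rw [intervalIntegral.integral_of_le hu0.le, ← integral_indicator measurableSet_Ioc]
    congr 1
    funext s
    by_cases hs : s ∈ Ioc (0:ℝ) u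
    · rw [indicator_of_mem hs, intervalIntegral.integral_of_le hs.1.le,
        integral_Ioc_eq_integral_Ioo, ← integral_indicator measurableSet_Ioo]
      congr 1
      funext τ
      by_cases hτ : τ ∈ Ioo (0:ℝ) s
      · rw [indicator_of_mem (show (τ, s) ∈ S from ⟨hτ.1, hτ.2, hs.2⟩),
          indicator_of_mem hτ]
      · rw [indicator_of_notMem hτ, indicator_of_notMem
          (show (τ, s) ∉ S from fun hc => hτ ⟨hc.1, hc.2.1⟩)]
    · have hz : ∀ τ : ℝ, S.indicator W (τ, s) = 0 := by
        intro τ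
        refine indicator_of_notMem (fun hc => ?_) _
        rcases hc with ⟨h1, h2, h3⟩
        exact hs ⟨lt_trans h1 h2, h3⟩
      rw [indicator_of_notMem hs]
      simp only [hz, integral_zero]
  rw [step1, step3, step4, step5]
end fub

/-- If `f` is uniformly `γ`-Hölder on `[0,T]` with `0 < γ < 1/2`, then the flux
`𝓕(t) = ∫₀ᵗ 𝔥(t-τ)f(τ)dτ` is differentiable on `(0,T)` with
`𝓕'(t) = f(t) + ∫₀ᵗ 𝔥'(t-τ)f(τ)dτ`. -/
theorem stmt_12 (ν T L γ : ℝ) (hν : 0 < ν) (hT : 0 < T) (hL : 0 < L)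
    (hγ₀ : 0 < γ) (hγ : γ < 1/2) (f : ℝ → ℝ)
    (hf : ∀ t₁ ∈ Icc (0:ℝ) T, ∀ t₂ ∈ Icc (0:ℝ) T, |f t₁ - f t₂| ≤ L * |t₁ - t₂| ^ γ) :
    ∀ t ∈ Ioo (0:ℝ) T,
      HasDerivAt (fun u => ∫ τ in (0:ℝ)..u, fluxKernel ν (u - τ) * f τ)
        (f t + ∫ τ in (0:ℝ)..t, kernelDeriv ν (t - τ) * f τ) t := by
  intro t ht
  have hcf : ContinuousOn f (Icc 0 T) := hoelder_continuousOn hγ₀ hf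
  set B : ℝ := |f 0| + L * T ^ γ with hBdef
  have hB : ∀ τ ∈ Icc (0:ℝ) T, |f τ| ≤ B := hoelder_bound hT hL hγ₀ hf
  have hB0 : 0 ≤ B := by
    have h1 : (0:ℝ) ≤ L * T ^ γ := mul_nonneg hL.le (Real.rpow_nonneg hT.le γ)
    have h2 := abs_nonneg (f 0)
    rw [hBdef]; linarith
  set H : ℝ → ℝ := fun s => ∫ τ in (0:ℝ)..s, kernelDeriv ν (s - τ) * f τ with hHdef
  -- derivative of ∫ f
  have E1 : HasDerivAt (fun u => ∫ τ in (0:ℝ)..u, f τ) (f t) t := by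
    refine intervalIntegral.integral_hasDerivAt_right ?_ ?_ ?_
    · refine ContinuousOn.intervalIntegrable ?_
      rw [uIcc_of_le ht.1.le]
      exact hcf.mono (Icc_subset_Icc_right ht.2.le)
    · exact (hcf.mono Ioo_subset_Icc_self).stronglyMeasurableAtFilter isOpen_Ioo _ ht
    · exact hcf.continuousAt (Icc_mem_nhds ht.1 ht.2)
  -- derivative of ∫ H
  have hH_cont : ∀ s ∈ Ioo (0:ℝ) T, ContinuousAt H s := fun s hs =>
    H_continuousAt hν hT hcf hB hB0 hs
  have E2 : HasDerivAt (fun u => ∫ s in (0:ℝ)..u, H s) (H t) t := by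
    refine intervalIntegral.integral_hasDerivAt_right ?_ ?_ ?_
    · refine (intervalIntegrable_const (c := B * KC ν * 4 * T ^ ((1:ℝ)/4))).mono_fun ?_ ?_
      · rw [uIoc_of_le ht.1.le]
        have hc : ContinuousOn H (Ioc 0 t) := fun s hs =>
          (hH_cont s ⟨hs.1, lt_of_le_of_lt hs.2 ht.2⟩).continuousWithinAt
        exact hc.aestronglyMeasurable measurableSet_Ioc
      · rw [uIoc_of_le ht.1.le]
        filter_upwards [ae_restrict_mem measurableSet_Ioc] with s hs
        rw [Real.norm_eq_abs, Real.norm_eq_abs]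
        have h1 := H_bound hν hcf hB hB0 hT hs.1.le (le_trans hs.2 ht.2.le)
        exact h1.trans (le_abs_self _)
    · have hcH : ContinuousOn H (Ioo 0 T) := fun s hs => (hH_cont s hs).continuousWithinAt
      exact hcH.stronglyMeasurableAtFilter isOpen_Ioo _ ht
    · exact hH_cont t ht
  have hsum := E1.add E2
  have heq : (fun u => ∫ τ in (0:ℝ)..u, fluxKernel ν (u - τ) * f τ)
      =ᶠ[nhds t] (fun u => (∫ τ in (0:ℝ)..u, f τ) + ∫ s in (0:ℝ)..u, H s) := by
    filter_upwards [isOpen_Ioo.mem_nhds ht] with u hu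
    have i1 : IntervalIntegrable f volume 0 u := by
      refine ContinuousOn.intervalIntegrable ?_
      rw [uIcc_of_le hu.1.le]
      exact hcf.mono (Icc_subset_Icc_right hu.2.le)
    have i2 : IntervalIntegrable (fun τ => (fluxKernel ν (u - τ) - 1) * f τ) volume 0 u := by
      refine ContinuousOn.intervalIntegrable ?_
      rw [uIcc_of_le hu.1.le]
      refine ContinuousOn.mul (ContinuousOn.sub ?_ continuousOn_const)
        (hcf.mono (Icc_subset_Icc_right hu.2.le))
      refine (continuousOn_fluxKernel ν hν).comp
        ((continuous_const.sub continuous_id).continuousOn) ?_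
      intro τ hτ
      have h2 := hτ.2
      show (0:ℝ) ≤ u - τ
      linarith
    have hsplit : ∀ τ ∈ uIcc (0:ℝ) u,
        fluxKernel ν (u - τ) * f τ = f τ + (fluxKernel ν (u - τ) - 1) * f τ := by
      intro τ hτ; ring
    rw [intervalIntegral.integral_congr hsplit, intervalIntegral.integral_add i1 i2,
      fubini_step hν hT hcf hB hB0 hu.1 hu.2.le]
  exact hsum.congr_of_eventuallyEq heq
end
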